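/- arXiv:2503.12268 — 6 statements merged into one kernel-verified Lean document; each statement's English description precedes it below -/
import Mathlib

section
/- Let R = ⊕_{n≥0} R_n be an ℕ-graded ring, let S₀ be a generating set of the degree-zero subring R₀, and let S₊ be a set of homogeneous elements of the ideal R₊ = ⊕_{n≥1} R_n. If R₊ = S₊·R (i.e. S₊ generates R₊ as a right ideal of R), then S₀ ∪ S₊ generates R as a ring. -/
open DirectSum

variable {R : Type*} [Ring R]

/-- The additive subgroup of elements of positive degree in a graded ring. -/
def posPart (𝒜 : ℕ → AddSubgroup R) : AddSubgroup R := ⨆ n > 0, 𝒜 n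

/-- The right ideal generated by a set `S`, as an additive subgroup:
the additive closure of the products `s * r` with `s ∈ S`. -/
def rightIdealClosure (S : Set R) : AddSubgroup R :=
  AddSubgroup.closure {x | ∃ s ∈ S, ∃ r : R, x = s * r}

/-- The left ideal generated by a set `S`, as an additive subgroup. -/
def leftIdealClosure (S : Set R) : AddSubgroup R :=
  AddSubgroup.closure {x | ∃ s ∈ S, ∃ r : R, x = r * s}

/-- If `S₀` generates `R₀` as a ring and `Sp` is a set of homogeneous elements of
positive degree generating `R₊` as a right ideal, then `S₀ ∪ Sp` generates `R` as a ring. -/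
theorem stmt_0 (𝒜 : ℕ → AddSubgroup R) [GradedRing 𝒜] (S₀ Sp : Set R)
    (hS₀ : S₀ ⊆ (𝒜 0 : Set R))
    (hS₀gen : (𝒜 0 : Set R) ⊆ (Subring.closure S₀ : Set R))
    (hSphom : ∀ s ∈ Sp, ∃ n > 0, s ∈ 𝒜 n)
    (hgen : rightIdealClosure Sp = posPart 𝒜) :
    Subring.closure (S₀ ∪ Sp) = ⊤ := by
  classical
  have key : ∀ n, ∀ x ∈ 𝒜 n, x ∈ Subring.closure (S₀ ∪ Sp) := by
    intro n
    induction n using Nat.strong_induction_on with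
    | _ n IH =>
      intro x hx
      rcases Nat.eq_zero_or_pos n with rfl | hn
      · exact Subring.closure_mono Set.subset_union_left (hS₀gen hx)
      · have hxpos : x ∈ rightIdealClosure Sp := by
          rw [hgen]
          exact AddSubgroup.mem_iSup_of_mem n (AddSubgroup.mem_iSup_of_mem hn hx)
        -- the projection onto degree n as an AddMonoidHom
        set π : R →+ R := (𝒜 n).subtype.comp ((DFinsupp.evalAddMonoidHom n).comp
          (DirectSum.decomposeAddEquiv 𝒜).toAddMonoidHom) with hπ
        have hπ_apply : ∀ y : R, π y = (DirectSum.decompose 𝒜 y n : R) := fun _ => rfl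
        have hdec : π x ∈ Subring.closure (S₀ ∪ Sp) := by
          refine AddSubgroup.closure_induction ?_ ?_ ?_ ?_ hxpos
          · rintro _ ⟨s, hs, r, rfl⟩
            obtain ⟨d, hd, hsd⟩ := hSphom s hs
            have hr : s * r = ∑ m ∈ DFinsupp.support (DirectSum.decompose 𝒜 r),
                s * (DirectSum.decompose 𝒜 r m : R) := by
              rw [← Finset.mul_sum, DirectSum.sum_support_decompose]
            rw [hr, map_sum]
            refine Subring.sum_mem _ fun m _ => ?_
            have hmem : s * (DirectSum.decompose 𝒜 r m : R) ∈ 𝒜 (d + m) :=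
              SetLike.mul_mem_graded hsd (DirectSum.decompose 𝒜 r m).2
            by_cases h : d + m = n
            · rw [hπ_apply, DirectSum.decompose_of_mem_same 𝒜 (h ▸ hmem)]
              refine Subring.mul_mem _ (Subring.subset_closure (Or.inr hs))
                (IH m ?_ _ (DirectSum.decompose 𝒜 r m).2)
              omega
            · rw [hπ_apply, DirectSum.decompose_of_mem_ne 𝒜 hmem h]
              exact Subring.zero_mem _
          · simpa using Subring.zero_mem _
          · intro a b _ _ ha hb
            rw [map_add]; exact Subring.add_mem _ ha hb
          · intro a _ ha
            rw [map_neg]; exact Subring.neg_mem _ ha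
        rwa [hπ_apply, DirectSum.decompose_of_mem_same 𝒜 hx] at hdec
  rw [eq_top_iff]
  rintro x -
  rw [← DirectSum.sum_support_decompose 𝒜 x]
  exact Subring.sum_mem _ fun m _ => key m _ (DirectSum.decompose 𝒜 x m).2
end

section
/- Let R = ⊕_{n≥0} R_n be an ℕ-graded ring, let S₀ be a generating set of R₀, and let S₊ be a set of homogeneous elements of R₊ = ⊕_{n≥1} R_n. If R₊ = R·S₊ (i.e. S₊ generates R₊ as a left ideal of R), then S₀ ∪ S₊ generates R as a ring. -/
open DirectSum

variable {R : Type*} [Ring R]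

/-- If `S₀` generates `R₀` as a ring and `Sp` is a set of homogeneous elements of
positive degree generating `R₊` as a left ideal, then `S₀ ∪ Sp` generates `R` as a ring. -/
theorem stmt_1 (𝒜 : ℕ → AddSubgroup R) [GradedRing 𝒜] (S₀ Sp : Set R)
    (hS₀ : S₀ ⊆ (𝒜 0 : Set R))
    (hS₀gen : (𝒜 0 : Set R) ⊆ (Subring.closure S₀ : Set R))
    (hSphom : ∀ s ∈ Sp, ∃ n > 0, s ∈ 𝒜 n)
    (hgen : leftIdealClosure Sp = posPart 𝒜) :
    Subring.closure (S₀ ∪ Sp) = ⊤ := by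
  set C := Subring.closure (S₀ ∪ Sp) with hC
  have hS₀C : (𝒜 0 : Set R) ⊆ (C : Set R) := fun x hx =>
    Subring.closure_mono Set.subset_union_left (hS₀gen hx)
  have key : ∀ n : ℕ, ∀ x ∈ 𝒜 n, x ∈ C := by
    intro n
    induction n using Nat.strong_induction_on with
    | _ n ih =>
      intro x hx
      rcases Nat.eq_zero_or_pos n with rfl | hn
      · exact hS₀C hx
      · -- x ∈ posPart 𝒜 = leftIdealClosure Sp
        have hxpos : x ∈ leftIdealClosure Sp := by
          rw [hgen]
          exact AddSubgroup.mem_iSup_of_mem n (AddSubgroup.mem_iSup_of_mem hn hx)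
        have hproj : ∀ y ∈ leftIdealClosure Sp,
            (DirectSum.decompose 𝒜 y n : R) ∈ C := by
          intro y hy
          refine AddSubgroup.closure_induction ?_ ?_ ?_ ?_ hy
          · rintro z ⟨s, hs, r, rfl⟩
            obtain ⟨d, hd, hsd⟩ := hSphom s hs
            by_cases hdn : d ≤ n
            · rw [DirectSum.coe_decompose_mul_of_right_mem_of_le 𝒜 hsd hdn]
              have h1 : (DirectSum.decompose 𝒜 r (n - d) : R) ∈ C :=
                ih (n - d) (by omega) _ (DirectSum.decompose 𝒜 r (n - d)).2
              have h2 : s ∈ C :=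
                Subring.subset_closure (Set.mem_union_right _ hs)
              exact mul_mem h1 h2
            · rw [DirectSum.coe_decompose_mul_of_right_mem_of_not_le 𝒜 hsd hdn]
              exact zero_mem C
          · simp only [DirectSum.decompose_zero, DirectSum.zero_apply,
              ZeroMemClass.coe_zero]
            exact zero_mem C
          · intro a b _ _ ha hb
            simp only [DirectSum.decompose_add, DirectSum.add_apply,
              AddSubgroup.coe_add]
            exact add_mem ha hb
          · intro a _ ha
            simp only [DirectSum.decompose_neg, DFinsupp.neg_apply,
              AddSubgroup.coe_neg]
            exact neg_mem ha
        have := hproj x hxpos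
        rwa [DirectSum.decompose_of_mem_same 𝒜 hx] at this
  rw [eq_top_iff]
  intro x _
  classical
  rw [← DirectSum.sum_support_decompose 𝒜 x]
  exact Subring.sum_mem _ fun i _ => key i _ (DirectSum.decompose 𝒜 x i).2
end

section
/- Let R = ⊕_{n≥0} R_n be an ℕ-graded ring that is right Noetherian. If S₀ is a generating set of the subring R₀, then there exists a finite subset S₊ of homogeneous elements of R₊ such that S₀ ∪ S₊ generates R as a ring. -/
open DirectSum

variable {R : Type*} [Ring R]

/-- If the span of a set is finitely generated, a finite subset already spans it. -/
theorem span_fg_exists_finset {R M : Type*} [Semiring R] [AddCommMonoid M] [Module R M]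
    {s : Set M} (h : (Submodule.span R s).FG) :
    ∃ F : Finset M, ↑F ⊆ s ∧ Submodule.span R (F : Set M) = Submodule.span R s := by
  classical
  obtain ⟨G, hG⟩ := h
  choose f hf1 hf2 using fun g (hg : g ∈ G) =>
    Submodule.mem_span_finite_of_mem_span (hG ▸ Submodule.subset_span hg)
  refine ⟨G.attach.biUnion (fun g => f g g.2), ?_, le_antisymm ?_ ?_⟩
  · intro x hx
    simp only [Finset.coe_biUnion, Set.mem_iUnion, Finset.mem_coe] at hx
    obtain ⟨g, _, hx⟩ := hx
    exact hf1 g g.2 hx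
  · refine Submodule.span_mono ?_
    intro x hx
    simp only [Finset.coe_biUnion, Set.mem_iUnion, Finset.mem_coe] at hx
    obtain ⟨g, _, hx⟩ := hx
    exact hf1 g g.2 hx
  · rw [← hG]
    refine Submodule.span_le.2 fun g hg => ?_
    refine Submodule.span_mono ?_ (hf2 g hg)
    intro x hx
    simp only [Finset.coe_biUnion, Set.mem_iUnion, Finset.mem_coe]
    exact ⟨⟨g, hg⟩, Finset.mem_attach _ _, hx⟩

/-- If `R` is a right Noetherian graded ring and `S₀` generates `R₀` as a ring, then there
is a finite set of homogeneous elements of positive degree which together with `S₀`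
generates `R` as a ring. -/
theorem stmt_2 (𝒜 : ℕ → AddSubgroup R) [GradedRing 𝒜] [IsNoetherianRing Rᵐᵒᵖ]
    (S₀ : Set R)
    (hS₀ : S₀ ⊆ (𝒜 0 : Set R))
    (hS₀gen : (𝒜 0 : Set R) ⊆ (Subring.closure S₀ : Set R)) :
    ∃ Sp : Finset R, (∀ s ∈ Sp, ∃ n > 0, s ∈ 𝒜 n) ∧
      Subring.closure (S₀ ∪ (Sp : Set R)) = ⊤ := by
  classical
  -- the set of homogeneous elements of positive degree
  set H : Set R := {x | ∃ n > 0, x ∈ 𝒜 n} with hH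
  -- the right ideal generated by H, realized as a left ideal in the opposite ring
  have hfg : (Ideal.span (MulOpposite.op '' H)).FG :=
    IsNoetherian.noetherian _
  obtain ⟨F, hFsub, hFspan⟩ := span_fg_exists_finset hfg
  refine ⟨F.image MulOpposite.unop, ?_, ?_⟩
  · intro s hs
    simp only [Finset.mem_image] at hs
    obtain ⟨g, hg, rfl⟩ := hs
    obtain ⟨h, hh, rfl⟩ := hFsub hg
    exact hh
  · set Sp : Finset R := F.image MulOpposite.unop with hSp
    -- every homogeneous element lies in the closure
    have key : ∀ n : ℕ, ∀ x : R, x ∈ 𝒜 n → x ∈ Subring.closure (S₀ ∪ (Sp : Set R)) := by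
      intro n
      induction n using Nat.strong_induction_on with
      | _ n IH =>
        intro x hx
        rcases Nat.eq_zero_or_pos n with rfl | hn
        · exact Subring.closure_mono Set.subset_union_left (hS₀gen hx)
        · -- x ∈ H, hence op x ∈ span (op '' H) = span F
          have hxH : MulOpposite.op x ∈ Ideal.span (MulOpposite.op '' H) :=
            Ideal.subset_span ⟨x, ⟨n, hn, hx⟩, rfl⟩
          have hxF : MulOpposite.op x ∈ Submodule.span Rᵐᵒᵖ (F : Set Rᵐᵒᵖ) := by
            rw [hFspan]; exact hxH
          rw [Submodule.mem_span_set'] at hxF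
          obtain ⟨k, c, g, hsum⟩ := hxF
          -- transfer the sum back to R
          have hx' : x = ∑ i : Fin k, (MulOpposite.unop (g i : Rᵐᵒᵖ)) * (MulOpposite.unop (c i)) := by
            have := congrArg MulOpposite.unop hsum
            simpa using this.symm
          -- project to degree n
          have hxdec : x = (DirectSum.decompose 𝒜 x n : R) :=
            (DirectSum.decompose_of_mem_same 𝒜 hx).symm
          rw [hxdec, hx']
          have hdecsum : (DirectSum.decompose 𝒜
              (∑ i : Fin k, (MulOpposite.unop (g i : Rᵐᵒᵖ)) * (MulOpposite.unop (c i))) n : R)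
              = ∑ i : Fin k, (DirectSum.decompose 𝒜
                  ((MulOpposite.unop (g i : Rᵐᵒᵖ)) * (MulOpposite.unop (c i))) n : R) := by
            simp_rw [← GradedRing.proj_apply]
            exact map_sum (GradedRing.proj 𝒜 n) _ _
          rw [hdecsum]
          refine Subring.sum_mem _ fun i _ => ?_
          -- each term : t * r with t homogeneous of positive degree
          obtain ⟨t, htH, htop⟩ := hFsub (g i).2
          obtain ⟨d, hd, htd⟩ := htH
          have hteq : MulOpposite.unop (g i : Rᵐᵒᵖ) = t := by rw [← htop, MulOpposite.unop_op]
          rw [hteq]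
          by_cases hdn : d ≤ n
          · rw [DirectSum.coe_decompose_mul_of_left_mem_of_le 𝒜 htd hdn]
            have ht_mem : t ∈ Subring.closure (S₀ ∪ (Sp : Set R)) := by
              apply Subring.subset_closure
              refine Set.mem_union_right _ ?_
              simp only [hSp, Finset.coe_image, Set.mem_image, Finset.mem_coe]
              exact ⟨g i, (g i).2, by rw [← htop, MulOpposite.unop_op]⟩
            have hr_mem : ((DirectSum.decompose 𝒜 (MulOpposite.unop (c i)) (n - d) : 𝒜 (n - d)) : R)
                ∈ Subring.closure (S₀ ∪ (Sp : Set R)) := by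
              refine IH (n - d) (by omega) _ ?_
              exact SetLike.coe_mem _
            exact Subring.mul_mem _ ht_mem hr_mem
          · rw [DirectSum.coe_decompose_mul_of_left_mem_of_not_le 𝒜 htd hdn]
            exact Subring.zero_mem _
    -- conclude : every element of R is a sum of homogeneous components
    rw [eq_top_iff]
    intro x _
    rw [← DirectSum.sum_support_decompose 𝒜 x]
    exact Subring.sum_mem _ fun i _ => key i _ (SetLike.coe_mem _)
end

section
/- Let R = ⊕_{n≥0} R_n be an ℕ-graded ring that is right (or left) Noetherian. If the degree-zero subring R₀ is an affine ring (finitely generated as a ring), then R is affine. -/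
open DirectSum

variable {R : Type*} [Ring R]

/-- Key induction lemma: if there is a finite set `T` of homogeneous elements of
positive degrees such that every homogeneous element of positive degree `n` lies in
the additive closure of products `r * x` or `x * r` with `x ∈ T` and `r` homogeneous
of degree `< n`, then together with generators of `𝒜 0` the set `T` generates `R`. -/
theorem key_lemma (𝒜 : ℕ → AddSubgroup R) [GradedRing 𝒜] (T : Finset R)
    (hspan : ∀ n, 0 < n → ∀ a ∈ 𝒜 n, a ∈ AddSubgroup.closure
      {y : R | ∃ x ∈ T, ∃ m, m < n ∧ ∃ r ∈ 𝒜 m, y = r * x ∨ y = x * r})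
    (haff : ∃ S₀ : Finset R, (S₀ : Set R) ⊆ (𝒜 0 : Set R) ∧
      (𝒜 0 : Set R) ⊆ (Subring.closure (S₀ : Set R) : Set R)) :
    ∃ S : Finset R, Subring.closure (S : Set R) = ⊤ := by
  classical
  obtain ⟨S₀, _hS₀sub, hS₀gen⟩ := haff
  refine ⟨S₀ ∪ T, ?_⟩
  set C := Subring.closure ((S₀ ∪ T : Finset R) : Set R) with hC
  have hTC : ∀ x ∈ T, x ∈ C := fun x hx =>
    Subring.subset_closure (by simp [hx])
  have main : ∀ n, ∀ a ∈ 𝒜 n, a ∈ C := by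
    intro n
    induction n using Nat.strong_induction_on with
    | _ n ih =>
      intro a ha
      rcases Nat.eq_zero_or_pos n with rfl | hn
      · have : a ∈ Subring.closure (S₀ : Set R) := hS₀gen ha
        exact Subring.closure_mono (by simp) this
      · refine AddSubgroup.closure_induction ?_ (zero_mem C)
          (fun x y _ _ hx hy => add_mem hx hy)
          (fun x _ hx => neg_mem hx) (hspan n hn a ha)
        rintro y ⟨x, hxT, m, hmn, r, hr, rfl | rfl⟩
        · exact mul_mem (ih m hmn r hr) (hTC x hxT)
        · exact mul_mem (hTC x hxT) (ih m hmn r hr)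
  rw [eq_top_iff]
  intro a _
  rw [← DirectSum.sum_support_decompose 𝒜 a]
  exact sum_mem fun i _ => main i _ (SetLike.coe_mem _)

theorem isNoetherian_op_module (h : IsNoetherianRing Rᵐᵒᵖ) : IsNoetherian Rᵐᵒᵖ R := by
  haveI := h
  let e : Rᵐᵒᵖ ≃ₗ[Rᵐᵒᵖ] R :=
    { toFun := MulOpposite.unop
      invFun := MulOpposite.op
      map_add' := fun _ _ => rfl
      map_smul' := fun _ _ => rfl
      left_inv := fun _ => rfl
      right_inv := fun _ => rfl }
  exact isNoetherian_of_linearEquiv e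

/-- A right or left Noetherian graded ring with affine degree zero part is affine. -/
theorem stmt_3 (𝒜 : ℕ → AddSubgroup R) [GradedRing 𝒜]
    (hNoeth : IsNoetherianRing R ∨ IsNoetherianRing Rᵐᵒᵖ)
    (haff : ∃ S₀ : Finset R, (S₀ : Set R) ⊆ (𝒜 0 : Set R) ∧
      (𝒜 0 : Set R) ⊆ (Subring.closure (S₀ : Set R) : Set R)) :
    ∃ S : Finset R, Subring.closure (S : Set R) = ⊤ := by
  classical
  set Sset : Set R := ⋃ n ∈ {n : ℕ | 0 < n}, (𝒜 n : Set R) with hSset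
  have hmemS : ∀ {n : ℕ}, 0 < n → ∀ {a : R}, a ∈ 𝒜 n → a ∈ Sset := by
    intro n hn a ha
    exact Set.mem_biUnion hn ha
  have hS_elt : ∀ x ∈ Sset, ∃ d, 0 < d ∧ x ∈ 𝒜 d := by
    intro x hx
    simp only [hSset, Set.mem_iUnion, Set.mem_setOf_eq, SetLike.mem_coe] at hx
    obtain ⟨d, hd, hx⟩ := hx
    exact ⟨d, hd, hx⟩
  rcases hNoeth with hN | hN
  · -- left Noetherian case
    haveI := hN
    set I : Ideal R := Ideal.span Sset with hI
    obtain ⟨G, hG⟩ := IsNoetherian.noetherian I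
    choose f hf1 hf2 using fun (g : G) =>
      Submodule.mem_span_finite_of_mem_span
        (S := Sset) (x := (g : R)) (hI ▸ hG ▸ Submodule.subset_span g.2)
    set T : Finset R := G.attach.biUnion (fun g => f ⟨g.1, g.2⟩) with hT
    have hTS : (T : Set R) ⊆ Sset := by
      intro x hx
      simp only [hT, Finset.coe_biUnion, Set.mem_iUnion] at hx
      obtain ⟨g, _, hx⟩ := hx
      exact hf1 _ hx
    have hIT : I ≤ Submodule.span R (T : Set R) := by
      rw [← hG]
      refine Submodule.span_le.mpr ?_
      intro g hg
      refine Submodule.span_mono ?_ (hf2 ⟨g, Finset.mem_coe.mp hg⟩)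
      intro y hy
      simp only [hT, Finset.coe_biUnion, Set.mem_iUnion]
      exact ⟨⟨g, hg⟩, Finset.mem_attach _ _, hy⟩
    refine key_lemma 𝒜 T ?_ haff
    intro n hn a ha
    have haI : a ∈ Submodule.span R (T : Set R) :=
      hIT (Submodule.subset_span (hmemS hn ha))
    obtain ⟨c, hcsupp, hsum⟩ := Submodule.mem_span_set.mp haI
    have hproj : a = ∑ x ∈ c.support, (DirectSum.decompose 𝒜 ((c x) * x) n : R) := by
      conv_lhs => rw [← DirectSum.decompose_of_mem_same 𝒜 ha, ← hsum]
      rw [Finsupp.sum, ← GradedRing.proj_apply, map_sum]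
      refine Finset.sum_congr rfl fun x _ => ?_
      rw [GradedRing.proj_apply, smul_eq_mul]
    rw [hproj]
    refine sum_mem fun x hx => ?_
    obtain ⟨d, hd, hxd⟩ := hS_elt x (hTS (hcsupp hx))
    by_cases hdn : d ≤ n
    · rw [DirectSum.coe_decompose_mul_of_right_mem_of_le 𝒜 hxd hdn]
      refine AddSubgroup.subset_closure ?_
      exact ⟨x, hcsupp hx, n - d, by omega, _, SetLike.coe_mem _, Or.inl rfl⟩
    · rw [DirectSum.coe_decompose_mul_of_right_mem_of_not_le 𝒜 hxd hdn]
      exact zero_mem _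
  · -- right Noetherian case
    haveI := isNoetherian_op_module hN
    set I : Submodule Rᵐᵒᵖ R := Submodule.span Rᵐᵒᵖ Sset with hI
    obtain ⟨G, hG⟩ := IsNoetherian.noetherian I
    choose f hf1 hf2 using fun (g : G) =>
      Submodule.mem_span_finite_of_mem_span
        (S := Sset) (x := (g : R)) (hI ▸ hG ▸ Submodule.subset_span g.2)
    set T : Finset R := G.attach.biUnion (fun g => f ⟨g.1, g.2⟩) with hT
    have hTS : (T : Set R) ⊆ Sset := by
      intro x hx
      simp only [hT, Finset.coe_biUnion, Set.mem_iUnion] at hx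
      obtain ⟨g, _, hx⟩ := hx
      exact hf1 _ hx
    have hIT : I ≤ Submodule.span Rᵐᵒᵖ (T : Set R) := by
      rw [← hG]
      refine Submodule.span_le.mpr ?_
      intro g hg
      refine Submodule.span_mono ?_ (hf2 ⟨g, Finset.mem_coe.mp hg⟩)
      intro y hy
      simp only [hT, Finset.coe_biUnion, Set.mem_iUnion]
      exact ⟨⟨g, hg⟩, Finset.mem_attach _ _, hy⟩
    refine key_lemma 𝒜 T ?_ haff
    intro n hn a ha
    have haI : a ∈ Submodule.span Rᵐᵒᵖ (T : Set R) :=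
      hIT (Submodule.subset_span (hmemS hn ha))
    obtain ⟨c, hcsupp, hsum⟩ := Submodule.mem_span_set.mp haI
    have hproj : a = ∑ x ∈ c.support, (DirectSum.decompose 𝒜 (x * (c x).unop) n : R) := by
      conv_lhs => rw [← DirectSum.decompose_of_mem_same 𝒜 ha, ← hsum]
      rw [Finsupp.sum, ← GradedRing.proj_apply, map_sum]
      refine Finset.sum_congr rfl fun x _ => ?_
      rw [GradedRing.proj_apply, MulOpposite.smul_eq_mul_unop]
    rw [hproj]
    refine sum_mem fun x hx => ?_
    obtain ⟨d, hd, hxd⟩ := hS_elt x (hTS (hcsupp hx))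
    by_cases hdn : d ≤ n
    · rw [DirectSum.coe_decompose_mul_of_left_mem_of_le 𝒜 hxd hdn]
      refine AddSubgroup.subset_closure ?_
      exact ⟨x, hcsupp hx, n - d, by omega, _, SetLike.coe_mem _, Or.inr rfl⟩
    · rw [DirectSum.coe_decompose_mul_of_left_mem_of_not_le 𝒜 hxd hdn]
      exact zero_mem _
end

section
/- Let A = ⊕_{n≥0} A_n be an ℕ-graded algebra over a field k that is Noetherian. If A₀ is an affine k-algebra (finitely generated as a k-algebra), then A is an affine k-algebra. -/
open DirectSum

/-- A Noetherian graded algebra over a field whose degree zero part is an affine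
`k`-algebra is itself an affine `k`-algebra. -/
theorem stmt_5 {k A : Type*} [Field k] [Ring A] [Algebra k A]
    (𝒜 : ℕ → Submodule k A) [GradedAlgebra 𝒜]
    [IsNoetherianRing A] [IsNoetherianRing Aᵐᵒᵖ]
    (haff : ∃ S₀ : Finset A, (S₀ : Set A) ⊆ (𝒜 0 : Set A) ∧
      (𝒜 0 : Set A) ⊆ (Algebra.adjoin k (S₀ : Set A) : Set A)) :
    Algebra.FiniteType k A := by
  classical
  obtain ⟨S₀, hS₀mem, hS₀gen⟩ := haff
  -- the set of homogeneous elements of positive degree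
  set S : Set A := ⋃ n ∈ {n : ℕ | 0 < n}, (𝒜 n : Set A) with hS
  -- the irrelevant ideal is finitely generated
  have hfg : (Ideal.span S).FG := IsNoetherian.noetherian _
  obtain ⟨G, hG⟩ := hfg
  -- find a finite subset T of S spanning the same ideal
  have hT : ∃ T : Finset A, ↑T ⊆ S ∧ Ideal.span S ≤ Ideal.span (T : Set A) := by
    choose f hf1 hf2 using fun g (hg : g ∈ Ideal.span S) =>
      Submodule.mem_span_finite_of_mem_span hg
    have hGmem : ∀ g ∈ G, (g : A) ∈ Ideal.span S := fun g hg =>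
      hG ▸ Ideal.subset_span hg
    refine ⟨G.attach.biUnion (fun g => f g (hGmem g g.2)), ?_, ?_⟩
    · intro x hx
      simp only [Finset.coe_biUnion, Set.mem_iUnion] at hx
      obtain ⟨g, hg, hx⟩ := hx
      exact hf1 _ _ hx
    · rw [← hG, Ideal.span_le]
      intro g hg
      refine Submodule.span_mono ?_ (hf2 g (hGmem g hg))
      intro x hx
      simp only [Finset.coe_biUnion, Set.mem_iUnion]
      exact ⟨⟨g, hg⟩, Finset.mem_attach _ _, hx⟩
  obtain ⟨T, hTS, hTspan⟩ := hT
  set B : Subalgebra k A := Algebra.adjoin k ((S₀ ∪ T : Finset A) : Set A) with hB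
  have hS₀B : (Algebra.adjoin k (S₀ : Set A) : Set A) ⊆ B :=
    Algebra.adjoin_mono (by simp [Finset.coe_union])
  have hTB : ∀ t ∈ T, t ∈ B := fun t ht =>
    Algebra.subset_adjoin (by simp [Finset.coe_union]; exact Or.inr ht)
  -- main induction
  have key : ∀ n : ℕ, ∀ a ∈ 𝒜 n, a ∈ B := by
    intro n
    induction n using Nat.strong_induction_on with
    | _ n ih =>
      intro a ha
      rcases Nat.eq_zero_or_pos n with rfl | hn
      · exact hS₀B (hS₀gen ha)
      · have haS : a ∈ S := Set.mem_biUnion hn ha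
        have : a ∈ Ideal.span (T : Set A) := hTspan (Ideal.subset_span haS)
        rw [Ideal.span, Submodule.mem_span_finset] at this
        obtain ⟨c, -, hc⟩ := this
        have hproj : a = ∑ t ∈ T, (GradedRing.proj 𝒜 n) (c t * t) := by
          rw [← map_sum]
          have : (GradedRing.proj 𝒜 n) a = a :=
            DirectSum.decompose_of_mem_same 𝒜 ha
          simp only [smul_eq_mul] at hc
          rw [hc, this]
        rw [hproj]
        refine Subalgebra.sum_mem _ fun t ht => ?_
        obtain ⟨_, ⟨d, rfl⟩, _, ⟨hd : 0 < d, rfl⟩, htd⟩ := hTS ht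
        by_cases hdn : d ≤ n
        · rw [GradedRing.proj_apply,
            DirectSum.coe_decompose_mul_of_right_mem_of_le 𝒜 htd hdn]
          exact mul_mem (ih (n - d) (by omega) _ (Submodule.coe_mem _)) (hTB t ht)
        · rw [GradedRing.proj_apply,
            DirectSum.coe_decompose_mul_of_right_mem_of_not_le 𝒜 htd hdn]
          exact zero_mem _
  have hBtop : B = ⊤ := by
    rw [eq_top_iff]
    intro a _
    rw [← DirectSum.sum_support_decompose 𝒜 a]
    exact Subalgebra.sum_mem _ fun i _ => key i _ (Submodule.coe_mem _)
  exact ⟨⟨S₀ ∪ T, hBtop⟩⟩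
end

section
/- Let R = ⊕_{n≥0} R_n be an ℕ-graded commutative ring that is Noetherian. Then R is a finitely generated R₀-algebra. -/
open DirectSum

instance gradeZeroAlgebra {R : Type*} [CommRing R] (𝒜 : ℕ → AddSubgroup R)
    [GradedRing 𝒜] : Algebra (𝒜 0) R :=
  ((SetLike.GradeZero.subring 𝒜).subtype).toAlgebra

/-- A Noetherian commutative `ℕ`-graded ring is a finitely generated `R₀`-algebra. -/
theorem stmt_12 {R : Type*} [CommRing R] (𝒜 : ℕ → AddSubgroup R) [GradedRing 𝒜]
    [IsNoetherianRing R] :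
    Algebra.FiniteType (𝒜 0) R := by
  classical
  set I : Ideal R := (HomogeneousIdeal.irrelevant 𝒜).toIdeal with hI
  obtain ⟨t, ht⟩ : I.FG := IsNoetherian.noetherian I
  set S : Finset R :=
    t.biUnion (fun x => (DirectSum.decompose 𝒜 x).support.image
      (fun i => (DirectSum.decompose 𝒜 x i : R))) with hS
  -- every element of S is homogeneous of positive degree and belongs to I
  have hS_mem : ∀ s ∈ S, ∃ i : ℕ, i ≠ 0 ∧ s ∈ 𝒜 i := by
    intro s hs
    simp only [hS, Finset.mem_biUnion, Finset.mem_image] at hs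
    obtain ⟨x, hxt, i, hi, rfl⟩ := hs
    refine ⟨i, ?_, SetLike.coe_mem _⟩
    rintro rfl
    have hxI : x ∈ I := ht ▸ Ideal.subset_span hxt
    rw [hI, HomogeneousIdeal.mem_iff, HomogeneousIdeal.mem_irrelevant_iff] at hxI
    exact (DFinsupp.mem_support_iff.mp hi) (by
      ext
      simpa [GradedRing.proj_apply] using hxI)
  have hS_in_I : ∀ s ∈ S, s ∈ I := by
    intro s hs
    simp only [hS, Finset.mem_biUnion, Finset.mem_image] at hs
    obtain ⟨x, hxt, i, _, rfl⟩ := hs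
    have hxI : x ∈ I := ht ▸ Ideal.subset_span hxt
    exact (HomogeneousIdeal.irrelevant 𝒜).isHomogeneous i hxI
  -- S generates I
  have hspan : Ideal.span (S : Set R) = I := by
    apply le_antisymm
    · exact Ideal.span_le.mpr hS_in_I
    · rw [← ht, Ideal.span_le]
      intro x hxt
      rw [← DirectSum.sum_support_decompose 𝒜 x]
      refine Ideal.sum_mem _ (fun i hi => Ideal.subset_span ?_)
      simp only [hS, Finset.coe_biUnion, Set.mem_iUnion, Finset.coe_image, Set.mem_image]
      exact ⟨x, hxt, i, hi, rfl⟩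
  -- the main induction
  have key : ∀ n : ℕ, ∀ x : R, x ∈ 𝒜 n → x ∈ Algebra.adjoin (𝒜 0) (S : Set R) := by
    intro n
    induction n using Nat.strong_induction_on with
    | _ n ih =>
      intro x hx
      rcases Nat.eq_zero_or_pos n with rfl | hn
      · exact Subalgebra.algebraMap_mem _ (⟨x, hx⟩ : 𝒜 0)
      · have hxI : x ∈ I := by
          rw [hI, HomogeneousIdeal.mem_iff, HomogeneousIdeal.mem_irrelevant_iff, GradedRing.proj_apply,
            DirectSum.decompose_of_mem_ne 𝒜 hx (by omega)]

        rw [← hspan] at hxI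
        obtain ⟨c, -, hc_sum⟩ := Submodule.mem_span_finset.mp hxI
        have hx_eq : x = (DirectSum.decompose 𝒜 x n : R) := by
          rw [DirectSum.decompose_of_mem_same 𝒜 hx]
        rw [hx_eq, ← hc_sum, DirectSum.decompose_sum]
        rw [DFinsupp.finset_sum_apply, AddSubgroup.val_finset_sum]
        refine Subalgebra.sum_mem _ (fun s hs => ?_)
        obtain ⟨i, hi0, hsi⟩ := hS_mem s hs
        by_cases hin : i ≤ n
        · rw [smul_eq_mul, DirectSum.coe_decompose_mul_of_right_mem_of_le 𝒜 hsi hin]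
          exact mul_mem (ih (n - i) (by omega) _ (SetLike.coe_mem _))
            (Algebra.subset_adjoin hs)
        · rw [smul_eq_mul, DirectSum.coe_decompose_mul_of_right_mem_of_not_le 𝒜 hsi hin]
          exact Subalgebra.zero_mem _
  refine ⟨S, ?_⟩
  rw [eq_top_iff]
  intro x _
  rw [← DirectSum.sum_support_decompose 𝒜 x]
  exact Subalgebra.sum_mem _ (fun i _ => key i _ (SetLike.coe_mem _))
end
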